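/- There does not exist a function g : ℕ⁺ → ℝ and a constant 0 < C < 4 such that g(1) = 1, g(ℓ) ≥ 1 for all ℓ, and for every ℓ ≥ 2, the sum over i from 1 to ℓ-1 of g(ℓ)/(g(i)·g(ℓ-i)) is at most C. -/

import Mathlib

open Finset Filter

private lemma key_lb (C : ℝ) (hC : 0 < C) (h : ℕ → ℝ) (hnn : ∀ i, 1 ≤ i → 0 ≤ h i)
    (h1 : h 1 = 1)
    (hrec : ∀ ℓ : ℕ, 2 ≤ ℓ → ∑ i ∈ Finset.Ico 1 ℓ, h i * h (ℓ - i) ≤ C * h ℓ) :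
    ∀ ℓ : ℕ, 1 ≤ ℓ → (catalan (ℓ - 1) : ℝ) / C ^ (ℓ - 1) ≤ h ℓ := by
  intro ℓ
  induction ℓ using Nat.strong_induction_on with
  | _ ℓ IH =>
    intro hℓ
    rcases eq_or_lt_of_le hℓ with h1' | h2
    · simp [← h1', h1]
    · -- ℓ ≥ 2
      have hℓ2 : 2 ≤ ℓ := h2
      have hsum := hrec ℓ hℓ2
      have hlow : ((catalan (ℓ - 1) : ℝ)) / C ^ (ℓ - 2) ≤
          ∑ i ∈ Finset.Ico 1 ℓ, h i * h (ℓ - i) := by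
        have step : ∀ i ∈ Finset.Ico 1 ℓ,
            (catalan (i - 1) : ℝ) * catalan (ℓ - i - 1) / C ^ (ℓ - 2) ≤ h i * h (ℓ - i) := by
          intro i hi
          simp only [Finset.mem_Ico] at hi
          obtain ⟨hi1, hi2⟩ := hi
          have hℓi1 : 1 ≤ ℓ - i := by omega
          have hℓiℓ : ℓ - i < ℓ := by omega
          have A := IH i hi2 hi1
          have B := IH (ℓ - i) hℓiℓ hℓi1
          have hA0 : (0:ℝ) ≤ (catalan (i - 1) : ℝ) / C ^ (i - 1) := by positivity
          have hB0 : (0:ℝ) ≤ (catalan (ℓ - i - 1) : ℝ) / C ^ (ℓ - i - 1) := by positivity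
          have := mul_le_mul A B hB0 ((hA0.trans A).trans (le_refl _))
          calc (catalan (i - 1) : ℝ) * catalan (ℓ - i - 1) / C ^ (ℓ - 2)
              = ((catalan (i - 1) : ℝ) / C ^ (i - 1)) *
                ((catalan (ℓ - i - 1) : ℝ) / C ^ (ℓ - i - 1)) := by
                rw [div_mul_div_comm, ← pow_add]
                congr 2
                omega
            _ ≤ h i * h (ℓ - i) := this
        have := Finset.sum_le_sum step
        refine le_trans (le_of_eq ?_) this
        rw [← Finset.sum_div]
        congr 1
        -- ∑_{i ∈ Ico 1 ℓ} catalan (i-1) * catalan (ℓ-i-1) = catalan (ℓ-1)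
        have hre : ∑ i ∈ Finset.Ico 1 ℓ, (catalan (i - 1) : ℝ) * catalan (ℓ - i - 1)
            = ∑ j ∈ Finset.range (ℓ - 1), (catalan j : ℝ) * catalan (ℓ - 2 - j) := by
          rw [Finset.sum_Ico_eq_sum_range]
          apply Finset.sum_congr (by congr 1)
          intro j hj
          rw [show 1 + j - 1 = j from by omega, show ℓ - (1 + j) - 1 = ℓ - 2 - j from by omega]
        rw [hre]
        have hcat : catalan (ℓ - 1) = ∑ j ∈ Finset.range (ℓ - 1), catalan j * catalan (ℓ - 2 - j) := by
          have := catalan_succ' (ℓ - 2)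
          rw [Nat.sum_antidiagonal_eq_sum_range_succ (fun x y => catalan x * catalan y)] at this
          rw [show (ℓ - 2).succ = ℓ - 1 from by omega,
            show ℓ - 2 + 1 = ℓ - 1 from by omega] at this
          exact this
        rw [hcat]
        push_cast
        ring
      have : (catalan (ℓ - 1) : ℝ) / C ^ (ℓ - 2) ≤ C * h ℓ := hlow.trans hsum
      rw [div_le_iff₀ (by positivity)] at this ⊢
      have hpow : C ^ (ℓ - 1) = C * C ^ (ℓ - 2) := by
        rw [← pow_succ']
        congr 1
        omega
      rw [hpow]
      calc (catalan (ℓ - 1) : ℝ) ≤ C * h ℓ * C ^ (ℓ - 2) := this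
        _ = h ℓ * (C * C ^ (ℓ - 2)) := by ring
  
theorem stmt_3 : ¬ ∃ (g : ℕ → ℝ) (C : ℝ), 0 < C ∧ C < 4 ∧
    g 1 = 1 ∧ (∀ ℓ : ℕ, 1 ≤ ℓ → 1 ≤ g ℓ) ∧
    (∀ ℓ : ℕ, 2 ≤ ℓ → ∑ i ∈ Finset.Ico 1 ℓ, g ℓ / (g i * g (ℓ - i)) ≤ C) := by
  rintro ⟨g, C, hC0, hC4, hg1, hgge, hgsum⟩
  set h : ℕ → ℝ := fun i => (g i)⁻¹ with hh
  have hgpos : ∀ i, 1 ≤ i → 0 < g i := fun i hi => lt_of_lt_of_le one_pos (hgge i hi)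
  have h1 : h 1 = 1 := by simp [hh, hg1]
  have hnn : ∀ i, 1 ≤ i → 0 ≤ h i := fun i hi => le_of_lt (inv_pos.mpr (hgpos i hi))
  have hle1 : ∀ i, 1 ≤ i → h i ≤ 1 := fun i hi =>
    inv_le_one_of_one_le₀ (hgge i hi)
  have hrec : ∀ ℓ : ℕ, 2 ≤ ℓ → ∑ i ∈ Finset.Ico 1 ℓ, h i * h (ℓ - i) ≤ C * h ℓ := by
    intro ℓ hℓ
    have hgl : 0 < g ℓ := hgpos ℓ (by omega)
    have := hgsum ℓ hℓ
    have heq : ∑ i ∈ Finset.Ico 1 ℓ, g ℓ / (g i * g (ℓ - i))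
        = g ℓ * ∑ i ∈ Finset.Ico 1 ℓ, h i * h (ℓ - i) := by
      rw [Finset.mul_sum]
      apply Finset.sum_congr rfl
      intro i hi
      simp only [Finset.mem_Ico] at hi
      field_simp [hh]
      rw [hh, one_div, mul_inv]
    rw [heq] at this
    have : ∑ i ∈ Finset.Ico 1 ℓ, h i * h (ℓ - i) ≤ C / g ℓ := by
      rw [le_div_iff₀ hgl]
      linarith [this]
    calc ∑ i ∈ Finset.Ico 1 ℓ, h i * h (ℓ - i) ≤ C / g ℓ := this
      _ = C * h ℓ := by rw [hh]; field_simp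
  have hkey := key_lb C hC0 h hnn h1 hrec
  have hcat : ∀ n : ℕ, (catalan n : ℝ) ≤ C ^ n := by
    intro n
    have := hkey (n + 1) (by omega)
    simp only [Nat.add_sub_cancel] at this
    have h2 := hle1 (n + 1) (by omega)
    have hCp : (0:ℝ) < C ^ n := by positivity
    rw [div_le_iff₀ hCp] at this
    nlinarith [this, h2, hCp]
  -- find N with C ^ N < catalan N
  have hr0 : (0:ℝ) ≤ C / 4 := by positivity
  have hr1 : C / 4 < 1 := by linarith
  have htend := tendsto_pow_const_mul_const_pow_of_lt_one 2 hr0 hr1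
  have hev : ∀ᶠ n : ℕ in atTop, (n:ℝ) ^ 2 * (C/4) ^ n < 1/4 := by
    have := htend.eventually (eventually_lt_nhds (by norm_num : (0:ℝ) < 1/4))
    exact this
  obtain ⟨N, hN4, hNlt⟩ := (eventually_ge_atTop 4).and hev |>.exists
  have hbinN := Nat.four_pow_lt_mul_centralBinom N hN4
  rw [← succ_mul_catalan_eq_centralBinom] at hbinN
  have hbinR : (4:ℝ) ^ N < N * ((N + 1) * catalan N) := by
    exact_mod_cast hbinN
  have hN4R : (4:ℝ) ≤ (N:ℝ) := by exact_mod_cast hN4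
  have hCpow : C ^ N = 4 ^ N * (C / 4) ^ N := by
    rw [← mul_pow, show (4:ℝ) * (C / 4) = C from by ring]
  have hcle := hcat N
  have hx0 : (0:ℝ) ≤ (C/4) ^ N := by positivity
  have hy0 : (0:ℝ) < (4:ℝ) ^ N := by positivity
  have hmain : (4:ℝ) ^ N < ((N:ℝ) * ((N:ℝ) + 1)) * ((4:ℝ) ^ N * (C / 4) ^ N) := by
    calc (4:ℝ) ^ N < (N:ℝ) * (((N:ℝ) + 1) * (catalan N : ℝ)) := hbinR
      _ = ((N:ℝ) * ((N:ℝ) + 1)) * (catalan N : ℝ) := by ring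
      _ ≤ ((N:ℝ) * ((N:ℝ) + 1)) * ((4:ℝ) ^ N * (C / 4) ^ N) := by
          rw [← hCpow]
          exact mul_le_mul_of_nonneg_left hcle (by positivity)
  nlinarith [hmain, mul_lt_mul_of_pos_left hNlt hy0,
    mul_nonneg (mul_nonneg hy0.le hx0) (by nlinarith : (0:ℝ) ≤ (N:ℝ) ^ 2 - (N:ℝ))]
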